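/- For any set D, the complete bornological tensor product C₀(D₁,V) ⊗̂ C₀(D₃,V) is isometrically isomorphic to C₀(D₁ × D₃, V), and if f : C₀(D₁,V) → C₀(D₂,V) and g : C₀(D₃,V) → C₀(D₄,V) are injective bounded V-linear maps between such modules, then the induced map f ⊗̂ g : C₀(D₁×D₃,V) → C₀(D₂×D₄,V) is injective. -/

import Mathlib

/-!
Statement 18: Let `V` be a complete discrete valuation ring with uniformiser `π`.  Model
`C₀(D, V)` as the `V`-module of functions `D → V` such that for every `n` only finitely
many values are not divisible by `πⁿ`.  Then `C₀(D₁,V) ⊗̂ C₀(D₃,V) ≅ C₀(D₁×D₃,V)`: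
`C₀(D₁×D₃,V)` is `π`-adically complete and the natural map from the algebraic tensor
product is injective with `π`-adically dense image.  Moreover, for injective bounded
(= `V`-linear) maps `f : C₀(D₁,V) → C₀(D₂,V)` and `g : C₀(D₃,V) → C₀(D₄,V)`, the induced
map `f ⊗̂ g : C₀(D₁×D₃,V) → C₀(D₂×D₄,V)` (the unique linear map extending the elementary
tensor formula) is injective.
-/

/-- `C₀(D, V)` as a submodule of `D → V`: functions whose values are eventually divisible
by every power of `π` outside a finite set. -/
def C0sub (V : Type) [CommRing V] (π : V) (D : Type) : Submodule V (D → V) where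
  carrier := {f | ∀ n : ℕ, {x : D | ¬ π ^ n ∣ f x}.Finite}
  zero_mem' := fun n => Set.finite_empty.subset fun x hx => absurd (dvd_zero _) hx
  add_mem' := fun {f g} hf hg n => ((hf n).union (hg n)).subset (by
    intro x hx
    by_cases h1 : π ^ n ∣ f x
    · by_cases h2 : π ^ n ∣ g x
      · exact absurd (dvd_add h1 h2) hx
      · exact Or.inr h2
    · exact Or.inl h1)
  smul_mem' := fun c f hf n => (hf n).subset (by
    intro x hx h
    exact hx (by simpa using h.mul_left c))

/-- The elementary "tensor" of two `C₀`-functions: `(a ⊗ b)(x, y) = a(x)·b(y)`. -/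
def mulElem {V : Type} [CommRing V] {π : V} {D1 D3 : Type}
    (a : ↥(C0sub V π D1)) (b : ↥(C0sub V π D3)) : ↥(C0sub V π (D1 × D3)) :=
  ⟨fun p => a.1 p.1 * b.1 p.2, fun n => ((a.2 n).prod (b.2 n)).subset (by
    intro p hp
    exact Set.mem_prod.mpr
      ⟨fun h => hp (h.mul_right _), fun h => hp (h.mul_left _)⟩)⟩

/-- The multiplication bilinear map `C₀(D₁) × C₀(D₃) → C₀(D₁ × D₃)`. -/
def mulBilin (V : Type) [CommRing V] (π : V) (D1 D3 : Type) :
    ↥(C0sub V π D1) →ₗ[V] ↥(C0sub V π D3) →ₗ[V] ↥(C0sub V π (D1 × D3)) :=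
  LinearMap.mk₂ V (fun a b => mulElem a b)
    (fun a a' b => Subtype.ext (funext fun p => add_mul _ _ _))
    (fun c a b => Subtype.ext (funext fun p => smul_mul_assoc c _ _))
    (fun a b b' => Subtype.ext (funext fun p => mul_add _ _ _))
    (fun c a b => Subtype.ext (funext fun p => mul_smul_comm c _ _))

namespace C0aux

open TensorProduct

variable {V : Type} [CommRing V] {π : V}

/-- Evaluation at a point, as a linear map. -/
def ev {D : Type} (y : D) : ↥(C0sub V π D) →ₗ[V] V where
  toFun v := v.1 y
  map_add' _ _ := rfl
  map_smul' _ _ := rfl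

lemma coe_sum_apply {D ι : Type} (u : Finset ι) (w : ι → ↥(C0sub V π D)) (q : D) :
    (↑(∑ j ∈ u, w j) : D → V) q = ∑ j ∈ u, (w j).1 q :=
  map_sum (ev q) w u

lemma lift_tmul {D1 D3 : Type} (a : ↥(C0sub V π D1)) (b : ↥(C0sub V π D3)) :
    TensorProduct.lift (mulBilin V π D1 D3) (a ⊗ₜ[V] b) = mulElem a b := rfl

section domain

variable [IsDomain V]

/-- Division by `π ^ n` inside `C₀`. -/
noncomputable def C0div {D : Type} (hπ : π ≠ 0) {n : ℕ} (x : ↥(C0sub V π D))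
    (hx : ∀ p, π ^ n ∣ x.1 p) : ↥(C0sub V π D) :=
  ⟨fun p => (hx p).choose, fun m => (x.2 (n + m)).subset (fun p hp hd => hp
    ((mul_dvd_mul_iff_left (pow_ne_zero n hπ)).1
      (by rwa [(hx p).choose_spec, pow_add] at hd)))⟩

lemma C0div_spec {D : Type} (hπ : π ≠ 0) {n : ℕ} (x : ↥(C0sub V π D))
    (hx : ∀ p, π ^ n ∣ x.1 p) : π ^ n • C0div hπ x hx = x :=
  Subtype.ext (funext fun p => ((hx p).choose_spec).symm)

lemma smul_top_mem_iff {M : Type} [AddCommGroup M] [Module V M] {n : ℕ} {x : M} :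
    x ∈ (Ideal.span {π} ^ n • ⊤ : Submodule V M) ↔ ∃ y, x = π ^ n • y := by
  open Pointwise in
  rw [Ideal.span_singleton_pow, Submodule.ideal_span_singleton_smul,
    ← SetLike.mem_coe, Submodule.coe_pointwise_smul, Set.mem_smul_set]
  constructor
  · rintro ⟨y, -, rfl⟩; exact ⟨y, rfl⟩
  · rintro ⟨y, rfl⟩; exact ⟨y, trivial, rfl⟩

lemma mem_V_iff_dvd {n : ℕ} {x : V} :
    x ∈ (Ideal.span {π} ^ n • ⊤ : Submodule V V) ↔ π ^ n ∣ x := by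
  rw [smul_top_mem_iff]
  constructor
  · rintro ⟨y, rfl⟩; exact ⟨y, rfl⟩
  · rintro ⟨c, rfl⟩; exact ⟨c, rfl⟩

lemma c0_smul_top_mem_iff (hπ : π ≠ 0) {D : Type} {n : ℕ} {x : ↥(C0sub V π D)} :
    x ∈ (Ideal.span {π} ^ n • ⊤ : Submodule V ↥(C0sub V π D)) ↔ ∀ p, π ^ n ∣ x.1 p := by
  rw [smul_top_mem_iff]
  constructor
  · rintro ⟨y, rfl⟩ p; exact ⟨y.1 p, rfl⟩
  · intro hx; exact ⟨C0div hπ x hx, (C0div_spec hπ x hx).symm⟩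

/-- `C₀(D, V)` is `π`-adically complete. -/
lemma c0_adicComplete (hπ : π ≠ 0) (hV : IsAdicComplete (Ideal.span {π}) V) (D : Type) :
    IsAdicComplete (Ideal.span {π}) ↥(C0sub V π D) := by
  refine { toIsHausdorff := ⟨fun x hx => ?_⟩, toIsPrecomplete := ⟨fun f hf => ?_⟩ }
  · refine Subtype.ext (funext fun p => ?_)
    refine hV.toIsHausdorff.haus (x.1 p) fun n => ?_
    rw [SModEq.zero, mem_V_iff_dvd]
    exact (c0_smul_top_mem_iff hπ).1 (SModEq.zero.1 (hx n)) p
  · have key : ∀ p, ∃ Lp, ∀ n, (f n).1 p ≡ Lp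
        [SMOD (Ideal.span {π} ^ n • ⊤ : Submodule V V)] := by
      intro p
      refine hV.toIsPrecomplete.prec (f := fun n => (f n).1 p) ?_
      intro m n hmn
      rw [SModEq.sub_mem, mem_V_iff_dvd]
      exact (c0_smul_top_mem_iff hπ).1 (SModEq.sub_mem.1 (hf hmn)) p
    choose L hL using key
    have hLd : ∀ n p, π ^ n ∣ (f n).1 p - L p := fun n p =>
      mem_V_iff_dvd.1 (SModEq.sub_mem.1 (hL p n))
    have hmem : (fun p => L p) ∈ C0sub V π D := by
      intro n
      refine ((f n).2 n).subset fun p hp hdf => ?_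
      exact hp (by simpa [sub_sub_cancel] using dvd_sub hdf (hLd n p))
    refine ⟨⟨L, hmem⟩, fun n => ?_⟩
    rw [SModEq.sub_mem]
    exact (c0_smul_top_mem_iff hπ).2 fun p => hLd n p

open Classical in
/-- The `C₀`-function supported at one point. -/
noncomputable def C0single {D : Type} (d : D) (c : V) : ↥(C0sub V π D) :=
  ⟨fun x => if x = d then c else 0, fun n => (Set.finite_singleton d).subset fun x hx => by
    simp only [Set.mem_setOf_eq] at hx
    by_cases hxd : x = d
    · exact hxd
    · rw [if_neg hxd] at hx
      exact absurd (dvd_zero _) hx⟩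

/-- Density of the image of the algebraic tensor product. -/
lemma c0_dense (hπ : π ≠ 0) {D1 D3 : Type} (h : ↥(C0sub V π (D1 × D3))) (n : ℕ) :
    ∃ t : TensorProduct V ↥(C0sub V π D1) ↥(C0sub V π D3),
      ∃ h' : ↥(C0sub V π (D1 × D3)),
        h - TensorProduct.lift (mulBilin V π D1 D3) t = π ^ n • h' := by
  classical
  set S := (h.2 n).toFinset with hS
  set t := ∑ p ∈ S, (C0single p.1 (h.1 p)) ⊗ₜ[V] (C0single p.2 (1 : V)) with ht
  have hval : ∀ q, (TensorProduct.lift (mulBilin V π D1 D3) t).1 q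
      = if q ∈ S then h.1 q else 0 := by
    intro q
    rw [ht, map_sum, coe_sum_apply]
    have : ∀ p ∈ S, (TensorProduct.lift (mulBilin V π D1 D3)
        ((C0single p.1 (h.1 p)) ⊗ₜ[V] (C0single p.2 (1 : V)))).1 q
        = if q = p then h.1 q else 0 := by
      intro p _
      rw [lift_tmul]
      show (if q.1 = p.1 then h.1 p else 0) * (if q.2 = p.2 then (1 : V) else 0)
        = if q = p then h.1 q else 0
      by_cases h1 : q.1 = p.1 <;> by_cases h2 : q.2 = p.2 <;>
        simp [Prod.ext_iff, h1, h2]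
      rw [show q = p from Prod.ext h1 h2]
    rw [Finset.sum_congr rfl this, Finset.sum_ite_eq S q (fun _ => h.1 q)]
  have hdvd : ∀ q, π ^ n ∣ (h - TensorProduct.lift (mulBilin V π D1 D3) t).1 q := by
    intro q
    show π ^ n ∣ h.1 q - (TensorProduct.lift (mulBilin V π D1 D3) t).1 q
    rw [hval q]
    by_cases hq : q ∈ S
    · simp [hq]
    · rw [if_neg hq, sub_zero]
      have := hq
      rw [hS, Set.Finite.mem_toFinset] at this
      exact not_not.1 this
  exact ⟨t, C0div hπ _ hdvd, (C0div_spec hπ _ hdvd).symm⟩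

set_option maxHeartbeats 1000000 in
set_option synthInstance.maxHeartbeats 400000 in
/-- Injectivity of the natural map from the algebraic tensor product. -/
lemma lift_inj (hπ : π ≠ 0) [IsPrincipalIdealRing V] {D1 D3 : Type} :
    Function.Injective (TensorProduct.lift (mulBilin V π D1 D3)) := by
  refine (injective_iff_map_eq_zero _).2 fun t ht => ?_
  obtain ⟨s, rfl⟩ := TensorProduct.exists_finset t
  classical
  set B : Submodule V ↥(C0sub V π D3) :=
    Submodule.span V (Prod.snd '' (s : Set (↥(C0sub V π D1) × ↥(C0sub V π D3)))) with hB
  haveI : Module.Finite V ↥B :=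
    Module.Finite.span_of_finite V ((s.finite_toSet).image _)
  obtain ⟨k, e⟩ := Module.basisOfFiniteTypeTorsionFree' (R := V) (M := ↥B)
  set v : Fin k → ↥(C0sub V π D3) := fun j => (e j : ↥(C0sub V π D3)) with hv
  have li : LinearIndependent V v :=
    e.linearIndependent.map' B.subtype (Submodule.ker_subtype B)
  have hmem : ∀ i : {x // x ∈ s}, (i.1.2 : ↥(C0sub V π D3)) ∈ B :=
    fun i => Submodule.subset_span ⟨i.1, i.2, rfl⟩
  set c : Fin k → ↥(C0sub V π D1) := fun j =>
    ∑ i ∈ s.attach, e.repr ⟨i.1.2, hmem i⟩ j • i.1.1 with hc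
  have hrep : ∑ i ∈ s, i.1 ⊗ₜ[V] i.2 = ∑ j, c j ⊗ₜ[V] v j := by
    rw [← Finset.sum_attach s (fun i => i.1 ⊗ₜ[V] i.2)]
    have hterm : ∀ i : {x // x ∈ s}, i.1.1 ⊗ₜ[V] i.1.2
        = ∑ j, (e.repr ⟨i.1.2, hmem i⟩ j • i.1.1) ⊗ₜ[V] v j := by
      intro i
      have h1 : i.1.2 = ∑ j, e.repr ⟨i.1.2, hmem i⟩ j • v j := by
        have h2 := e.sum_repr ⟨i.1.2, hmem i⟩
        have h3 := congrArg (Submodule.subtype B) h2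
        rw [map_sum] at h3
        simpa [hv] using h3.symm
      conv_lhs => rw [h1]
      rw [tmul_sum]
      exact Finset.sum_congr rfl fun j _ => by rw [tmul_smul, smul_tmul']
    rw [Finset.sum_congr rfl (fun i _ => hterm i), Finset.sum_comm]
    exact Finset.sum_congr rfl fun j _ => (TensorProduct.sum_tmul _ _ _).symm
  rw [hrep] at ht ⊢
  have hc0 : ∀ j, c j = 0 := by
    intro j
    refine Subtype.ext (funext fun x => ?_)
    refine Fintype.linearIndependent_iff.1 li (fun j => (c j).1 x) ?_ j
    refine Subtype.ext (funext fun y => ?_)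
    have hxy := congrFun (congrArg Subtype.val ht) (x, y)
    rw [map_sum, coe_sum_apply] at hxy
    rw [coe_sum_apply]
    simpa [lift_tmul, mulBilin, LinearMap.mk₂_apply, mulElem, ev] using hxy
  rw [Finset.sum_congr rfl (fun j _ => by rw [hc0 j, TensorProduct.zero_tmul])]
  simp

end domain

section maps

variable [IsDomain V]

/-- Slice of a function on a product in the second variable. -/
def sliceL {D1 D3 : Type} (h : ↥(C0sub V π (D1 × D3))) (x : D1) : ↥(C0sub V π D3) :=
  ⟨fun y => h.1 (x, y), fun n =>
    (Set.Finite.preimage (f := fun y => ((x, y) : D1 × D3))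
      (Function.Injective.injOn fun a b hab => congrArg Prod.snd hab) (h.2 n)).subset
      fun y hy => hy⟩

lemma dvd_map (hπ : π ≠ 0) {D D' : Type} (g : ↥(C0sub V π D) →ₗ[V] ↥(C0sub V π D'))
    {n : ℕ} (b : ↥(C0sub V π D)) (hb : ∀ y, π ^ n ∣ b.1 y) (z : D') :
    π ^ n ∣ (g b).1 z := by
  have hb' : b = π ^ n • C0div hπ b hb := (C0div_spec hπ b hb).symm
  rw [hb', map_smul]
  exact ⟨(g (C0div hπ b hb)).1 z, rfl⟩

/-- Applying a linear map in the second variable. -/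
def Gmap (hπ : π ≠ 0) {D1 D3 D4 : Type}
    (g : ↥(C0sub V π D3) →ₗ[V] ↥(C0sub V π D4)) :
    ↥(C0sub V π (D1 × D3)) →ₗ[V] ↥(C0sub V π (D1 × D4)) where
  toFun h := ⟨fun p => (g (sliceL h p.1)).1 p.2, by
    intro n
    have hsub : {p : D1 × D4 | ¬ π ^ n ∣ (g (sliceL h p.1)).1 p.2} ⊆
        ⋃ x ∈ Prod.fst '' {p : D1 × D3 | ¬ π ^ n ∣ h.1 p},
          (fun y => ((x, y) : D1 × D4)) '' {y : D4 | ¬ π ^ n ∣ (g (sliceL h x)).1 y} := by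
      rintro ⟨x, z⟩ hp
      have hx : x ∈ Prod.fst '' {p : D1 × D3 | ¬ π ^ n ∣ h.1 p} := by
        by_contra hx
        have hall : ∀ y, π ^ n ∣ (sliceL h x).1 y := fun y => by
          by_contra hy; exact hx ⟨(x, y), hy, rfl⟩
        exact hp (dvd_map hπ g _ hall z)
      exact Set.mem_biUnion hx ⟨z, hp, rfl⟩
    exact Set.Finite.subset
      (Set.Finite.biUnion ((h.2 n).image Prod.fst)
        fun x _ => ((g (sliceL h x)).2 n).image _) hsub⟩
  map_add' h h' := Subtype.ext (funext fun p => by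
    have hs : sliceL (h + h') p.1 = sliceL h p.1 + sliceL h' p.1 :=
      Subtype.ext (funext fun y => rfl)
    show (g (sliceL (h + h') p.1)).1 p.2 = _
    rw [hs, map_add]; rfl)
  map_smul' cc h := Subtype.ext (funext fun p => by
    have hs : sliceL (cc • h) p.1 = cc • sliceL h p.1 :=
      Subtype.ext (funext fun y => rfl)
    show (g (sliceL (cc • h) p.1)).1 p.2 = _
    rw [hs, map_smul]; rfl)

/-- Swapping the two coordinates. -/
def C0swap {A B : Type} : ↥(C0sub V π (A × B)) →ₗ[V] ↥(C0sub V π (B × A)) where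
  toFun h := ⟨fun p => h.1 (p.2, p.1), fun n =>
    (((h.2 n)).image Prod.swap).subset fun p hp => ⟨(p.2, p.1), hp, rfl⟩⟩
  map_add' _ _ := Subtype.ext (funext fun _ => rfl)
  map_smul' _ _ := Subtype.ext (funext fun _ => rfl)

lemma Gmap_mulElem (hπ : π ≠ 0) {D1 D3 D4 : Type}
    (g : ↥(C0sub V π D3) →ₗ[V] ↥(C0sub V π D4))
    (a : ↥(C0sub V π D1)) (b : ↥(C0sub V π D3)) :
    Gmap hπ g (mulElem a b) = mulElem a (g b) := by
  refine Subtype.ext (funext fun p => ?_)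
  have hs : sliceL (mulElem a b) p.1 = a.1 p.1 • b := Subtype.ext (funext fun y => rfl)
  show (g (sliceL (mulElem a b) p.1)).1 p.2 = _
  rw [hs, map_smul]
  rfl

lemma C0swap_mulElem {A B : Type} (a : ↥(C0sub V π A)) (b : ↥(C0sub V π B)) :
    C0swap (mulElem a b) = mulElem b a :=
  Subtype.ext (funext fun p => mul_comm _ _)

lemma Gmap_inj (hπ : π ≠ 0) {D1 D3 D4 : Type}
    {g : ↥(C0sub V π D3) →ₗ[V] ↥(C0sub V π D4)} (hg : Function.Injective g) :
    Function.Injective (Gmap (D1 := D1) hπ g) := by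
  intro h h' hh
  refine Subtype.ext (funext fun p => ?_)
  have hx : g (sliceL h p.1) = g (sliceL h' p.1) := by
    refine Subtype.ext (funext fun z => ?_)
    exact congrFun (congrArg Subtype.val hh) (p.1, z)
  exact congrFun (congrArg Subtype.val (hg hx)) p.2

lemma C0swap_inj {A B : Type} : Function.Injective (C0swap (V := V) (π := π) (A := A) (B := B)) := by
  intro h h' hh
  exact Subtype.ext (funext fun p => congrFun (congrArg Subtype.val hh) (p.2, p.1))

end maps

end C0aux

open C0aux in
theorem c0_tensor_product_and_injectivity
    (V : Type) [CommRing V] [IsDomain V] [IsDiscreteValuationRing V]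
    (π : V) (hπ : Irreducible π)
    (hV : IsAdicComplete (Ideal.span {π}) V)
    (D1 D2 D3 D4 : Type)
    (f : ↥(C0sub V π D1) →ₗ[V] ↥(C0sub V π D2)) (hf : Function.Injective f)
    (g : ↥(C0sub V π D3) →ₗ[V] ↥(C0sub V π D4)) (hg : Function.Injective g) :
    -- `C₀(D₁ × D₃, V)` is the completed tensor product `C₀(D₁,V) ⊗̂ C₀(D₃,V)`:
    IsAdicComplete (Ideal.span {π}) ↥(C0sub V π (D1 × D3)) ∧
    Function.Injective (TensorProduct.lift (mulBilin V π D1 D3)) ∧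
    (∀ h : ↥(C0sub V π (D1 × D3)), ∀ n : ℕ,
      ∃ t : TensorProduct V ↥(C0sub V π D1) ↥(C0sub V π D3),
        ∃ h' : ↥(C0sub V π (D1 × D3)),
          h - TensorProduct.lift (mulBilin V π D1 D3) t = π ^ n • h') ∧
    -- the induced map `f ⊗̂ g` exists, is unique, and is injective
    (∃ H : ↥(C0sub V π (D1 × D3)) →ₗ[V] ↥(C0sub V π (D2 × D4)),
      (∀ a b, H (mulElem a b) = mulElem (f a) (g b)) ∧
      Function.Injective H ∧
      ∀ H' : ↥(C0sub V π (D1 × D3)) →ₗ[V] ↥(C0sub V π (D2 × D4)),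
        (∀ a b, H' (mulElem a b) = mulElem (f a) (g b)) → H' = H) := by
  have hπ0 : π ≠ 0 := hπ.ne_zero
  set H : ↥(C0sub V π (D1 × D3)) →ₗ[V] ↥(C0sub V π (D2 × D4)) :=
    C0swap ∘ₗ Gmap hπ0 f ∘ₗ C0swap ∘ₗ Gmap hπ0 g with hH
  have helem : ∀ a b, H (mulElem a b) = mulElem (f a) (g b) := by
    intro a b
    rw [hH]
    simp only [LinearMap.comp_apply]
    rw [Gmap_mulElem, C0swap_mulElem, Gmap_mulElem, C0swap_mulElem]
  refine ⟨c0_adicComplete hπ0 hV _, lift_inj hπ0, fun h n => c0_dense hπ0 h n, H, helem, ?_, ?_⟩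
  · -- injectivity of H
    rw [hH]
    simp only [LinearMap.coe_comp]
    exact C0swap_inj.comp ((Gmap_inj hπ0 hf).comp (C0swap_inj.comp (Gmap_inj hπ0 hg)))
  · -- uniqueness
    intro H' hH'
    have hlift : ∀ t, H' (TensorProduct.lift (mulBilin V π D1 D3) t)
        = H (TensorProduct.lift (mulBilin V π D1 D3) t) := by
      intro t
      induction t with
      | zero => simp
      | tmul a b => rw [lift_tmul, hH', helem]
      | add u w hu hw => rw [map_add, map_add, map_add, hu, hw]
    refine LinearMap.ext fun h => ?_
    have key : ∀ n : ℕ, ∀ p, π ^ n ∣ (H' h).1 p - (H h).1 p := by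
      intro n
      obtain ⟨t, h'', hth⟩ := c0_dense hπ0 h n
      have hh : h = TensorProduct.lift (mulBilin V π D1 D3) t + π ^ n • h'' := by
        rw [← hth]; abel
      intro p
      have hcalc : (H' h).1 p - (H h).1 p = π ^ n * ((H' h'').1 p - (H h'').1 p) := by
        rw [hh, map_add, map_add, map_smul, map_smul, hlift t]
        show (H (TensorProduct.lift (mulBilin V π D1 D3) t)).1 p + π ^ n * (H' h'').1 p
          - ((H (TensorProduct.lift (mulBilin V π D1 D3) t)).1 p + π ^ n * (H h'').1 p) = _
        ring
      rw [hcalc]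
      exact ⟨_, rfl⟩
    have hz : ∀ p, (H' h).1 p - (H h).1 p = 0 := by
      intro p
      refine hV.toIsHausdorff.haus _ fun n => ?_
      rw [SModEq.zero, mem_V_iff_dvd]
      exact key n p
    exact Subtype.ext (funext fun p => sub_eq_zero.1 (hz p))
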